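/- There is an absolute constant c > 0 with the following property. For every integer m ≥ 2, let n = m² and let P = {(i, j, i² + j²) : i, j ∈ {1, …, m}} ⊆ ℝ³ (the m × m integer grid lifted to the paraboloid z = x² + y²). Then for every integer k with 2 ≤ k ≤ n and every partition of P into parts Q_1, …, Q_u with k ≤ |Q_i| ≤ 2k for every i, there exists an affine plane h in ℝ³ that separates at least c·√(n/k) of the parts Q_1, …, Q_u. -/

import Mathlib

/-- An affine plane `{x | a·x₁ + b·x₂ + c·x₃ + d = 0}` separates `Q` if each of
the two open halfspaces it bounds contains a point of `Q`. -/
def PlaneSeparates (a b c d : ℝ) (Q : Finset (ℝ × ℝ × ℝ)) : Prop :=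
  (∃ p ∈ Q, 0 < a * p.1 + b * p.2.1 + c * p.2.2 + d) ∧
  (∃ p ∈ Q, a * p.1 + b * p.2.1 + c * p.2.2 + d < 0)

/-- The `m × m` grid lifted to the paraboloid `z = x² + y²`. -/
noncomputable def liftedGrid (m : ℕ) : Finset (ℝ × ℝ × ℝ) :=
  ((Finset.Icc 1 m) ×ˢ (Finset.Icc 1 m)).image
    (fun ij => ((ij.1 : ℝ), (ij.2 : ℝ), (ij.1 : ℝ) ^ 2 + (ij.2 : ℝ) ^ 2))

/-- For the lifted grid of `n = m²` points, any partition into parts of sizes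
between `k` and `2k` admits a plane separating at least `c·√(n/k)` parts. -/
lemma mem_liftedGrid {m : ℕ} {p : ℝ × ℝ × ℝ} :
    p ∈ liftedGrid m ↔ ∃ a b : ℕ, 1 ≤ a ∧ a ≤ m ∧ 1 ≤ b ∧ b ≤ m ∧
      p = ((a : ℝ), (b : ℝ), (a : ℝ) ^ 2 + (b : ℝ) ^ 2) := by
  simp only [liftedGrid, Finset.mem_image, Finset.mem_product, Finset.mem_Icc, Prod.exists]
  constructor
  · rintro ⟨a, b, ⟨⟨h1, h2⟩, h3, h4⟩, rfl⟩
    exact ⟨a, b, h1, h2, h3, h4, rfl⟩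
  · rintro ⟨a, b, h1, h2, h3, h4, rfl⟩
    exact ⟨a, b, ⟨⟨h1, h2⟩, h3, h4⟩, rfl⟩

lemma card_liftedGrid (m : ℕ) : (liftedGrid m).card = m ^ 2 := by
  rw [liftedGrid, Finset.card_image_of_injective _ ?_, Finset.card_product, Nat.card_Icc]
  · simp [Nat.add_sub_cancel, sq]
  · intro x y h
    simp only [Prod.mk.injEq] at h
    exact Prod.ext (Nat.cast_injective h.1) (Nat.cast_injective h.2.1)

lemma gap_lemma (m t : ℕ) (R : Finset (ℝ × ℝ × ℝ)) (f : ℝ × ℝ × ℝ → ℝ)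
    (hf : ∀ p ∈ R, ∃ a : ℕ, 1 ≤ a ∧ a ≤ m ∧ f p = a)
    (hA : t + 1 ≤ (R.image f).card) :
    ∃ i0 : ℕ, 1 ≤ i0 ∧ i0 + t ≤ m ∧
      ∀ i ∈ Finset.Ico i0 (i0 + t),
        (∃ p ∈ R, ((i : ℝ) + 1/2) < f p) ∧ (∃ p ∈ R, f p < (i : ℝ) + 1/2) := by
  classical
  set A : Finset ℝ := R.image f with hAdef
  set A' : Finset ℕ := (Finset.Icc 1 m).filter (fun a => (a : ℝ) ∈ A) with hA'def
  have hAeq : A = A'.image (Nat.cast : ℕ → ℝ) := by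
    apply Finset.Subset.antisymm
    · intro x hx
      obtain ⟨p, hp, rfl⟩ := Finset.mem_image.mp hx
      obtain ⟨a, h1, h2, hfa⟩ := hf p hp
      refine Finset.mem_image.mpr ⟨a, ?_, hfa.symm⟩
      refine Finset.mem_filter.mpr ⟨Finset.mem_Icc.mpr ⟨h1, h2⟩, ?_⟩
      rw [← hfa]; exact hx
    · intro x hx
      obtain ⟨a, ha, rfl⟩ := Finset.mem_image.mp hx
      exact (Finset.mem_filter.mp ha).2
  have hcardA : A.card = A'.card := by
    rw [hAeq, Finset.card_image_of_injective _ Nat.cast_injective]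
  have hne : A'.Nonempty := by
    rw [← Finset.card_pos, ← hcardA]; omega
  set i0 := A'.min' hne with hi0
  set M := A'.max' hne with hM
  have hi0mem : i0 ∈ A' := A'.min'_mem hne
  have hMmem : M ∈ A' := A'.max'_mem hne
  have hi0M : i0 ≤ M := A'.min'_le _ hMmem
  have hsub : A' ⊆ Finset.Icc i0 M := fun x hx =>
    Finset.mem_Icc.mpr ⟨A'.min'_le _ hx, A'.le_max' _ hx⟩
  have hcard2 : A'.card ≤ M + 1 - i0 := by
    have := Finset.card_le_card hsub
    rwa [Nat.card_Icc] at this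
  have hgap : i0 + t ≤ M := by omega
  have h1i0 : 1 ≤ i0 := (Finset.mem_Icc.mp (Finset.mem_filter.mp hi0mem).1).1
  have hMm : M ≤ m := (Finset.mem_Icc.mp (Finset.mem_filter.mp hMmem).1).2
  obtain ⟨pmin, hpmin, hfmin⟩ := Finset.mem_image.mp (Finset.mem_filter.mp hi0mem).2
  obtain ⟨pmax, hpmax, hfmax⟩ := Finset.mem_image.mp (Finset.mem_filter.mp hMmem).2
  refine ⟨i0, h1i0, by omega, fun i hi => ?_⟩
  rw [Finset.mem_Ico] at hi
  constructor
  · refine ⟨pmax, hpmax, ?_⟩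
    have : (i : ℝ) + 1 ≤ M := by
      have : i + 1 ≤ M := by omega
      exact_mod_cast this
    rw [hfmax]; linarith
  · refine ⟨pmin, hpmin, ?_⟩
    have : (i0 : ℝ) ≤ i := by exact_mod_cast hi.1
    rw [hfmin]; linarith

lemma part_lemma (m k : ℕ) (hk : 2 ≤ k) (R : Finset (ℝ × ℝ × ℝ))
    (hR : ∀ p ∈ R, p ∈ liftedGrid m) (hcard : k ≤ R.card) :
    ∃ bv : Bool, ∃ i0 : ℕ, 1 ≤ i0 ∧ i0 + Nat.sqrt (k - 1) ≤ m ∧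
      ∀ i ∈ Finset.Ico i0 (i0 + Nat.sqrt (k - 1)),
        PlaneSeparates (if bv then 1 else 0) (if bv then 0 else 1) 0
          (-(i : ℝ) - 1/2) R := by
  classical
  set t := Nat.sqrt (k - 1) with ht
  -- injectivity of (x,y) projection on R
  have hz : ∀ p ∈ R, p.2.2 = p.1 ^ 2 + p.2.1 ^ 2 := by
    intro p hp
    obtain ⟨a, b, _, _, _, _, rfl⟩ := mem_liftedGrid.mp (hR p hp)
    rfl
  have hinj : Set.InjOn (fun p : ℝ × ℝ × ℝ => (p.1, p.2.1)) R := by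
    intro p hp q hq h
    simp only [Prod.mk.injEq] at h
    have := hz p hp
    have := hz q hq
    exact Prod.ext h.1 (Prod.ext h.2 (by simp_all))
  have hAB : R.card ≤ (R.image (fun p => p.1)).card * (R.image (fun p => p.2.1)).card := by
    rw [← Finset.card_image_of_injOn hinj]
    calc (R.image (fun p : ℝ × ℝ × ℝ => (p.1, p.2.1))).card
        ≤ ((R.image (fun p => p.1)) ×ˢ (R.image (fun p => p.2.1))).card := by
          apply Finset.card_le_card
          intro x hx
          obtain ⟨p, hp, rfl⟩ := Finset.mem_image.mp hx
          exact Finset.mem_product.mpr ⟨Finset.mem_image_of_mem _ hp,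
            Finset.mem_image_of_mem _ hp⟩
      _ = _ := Finset.card_product _ _
  have htk : t * t ≤ k - 1 := by simpa [ht, pow_two] using Nat.sqrt_le' (k - 1)
  have hor : t + 1 ≤ (R.image (fun p => p.1)).card ∨
      t + 1 ≤ (R.image (fun p => p.2.1)).card := by
    by_contra hcon
    push_neg at hcon
    have := Nat.mul_le_mul (Nat.lt_succ_iff.mp (by omega : (R.image (fun p => p.1)).card < t + 1))
      (Nat.lt_succ_iff.mp (by omega : (R.image (fun p => p.2.1)).card < t + 1))
    omega
  rcases hor with h | h
  · obtain ⟨i0, h1, h2, h3⟩ := gap_lemma m t R (fun p => p.1)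
      (fun p hp => by
        obtain ⟨a, b, ha1, ha2, _, _, rfl⟩ := mem_liftedGrid.mp (hR p hp)
        exact ⟨a, ha1, ha2, rfl⟩) h
    refine ⟨true, i0, h1, h2, fun i hi => ?_⟩
    obtain ⟨⟨p, hp, hp2⟩, ⟨q, hq, hq2⟩⟩ := h3 i hi
    exact ⟨⟨p, hp, by simp; linarith⟩, ⟨q, hq, by simp; linarith⟩⟩
  · obtain ⟨i0, h1, h2, h3⟩ := gap_lemma m t R (fun p => p.2.1)
      (fun p hp => by
        obtain ⟨a, b, _, _, hb1, hb2, rfl⟩ := mem_liftedGrid.mp (hR p hp)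
        exact ⟨b, hb1, hb2, rfl⟩) h
    refine ⟨false, i0, h1, h2, fun i hi => ?_⟩
    obtain ⟨⟨p, hp, hp2⟩, ⟨q, hq, hq2⟩⟩ := h3 i hi
    exact ⟨⟨p, hp, by simp; linarith⟩, ⟨q, hq, by simp; linarith⟩⟩

lemma arith_lemma (M K T U C : ℝ) (hm : 0 < M) (hk : 0 < K)
    (f3 : K ≤ (T + 1) ^ 2) (f4 : 1 ≤ T) (f1 : M ^ 2 ≤ 2 * K * U)
    (f2 : U * T ≤ 2 * M * C) (hu : 0 ≤ U) (hC : 0 ≤ C) :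
    (1/8) * Real.sqrt (M ^ 2 / K) ≤ C := by
  set sk := Real.sqrt K with hskdef
  have hsk0 : 0 < sk := Real.sqrt_pos.mpr hk
  have hskk : sk ^ 2 = K := Real.sq_sqrt hk.le
  have f5 : sk ≤ 2 * T := by nlinarith [hskk, hsk0.le, f3, f4]
  have g2 : U * sk ≤ 4 * M * C := by nlinarith [mul_le_mul_of_nonneg_left f5 hu]
  have g3 : M ^ 2 ≤ 8 * sk * (M * C) := by
    nlinarith [mul_le_mul_of_nonneg_left g2 hsk0.le, f1, hskk]
  have g4 : M ≤ 8 * sk * C := by nlinarith [g3, hm]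
  rw [Real.sqrt_div (by positivity) _, Real.sqrt_sq hm.le, ← hskdef]
  calc (1/8) * (M / sk) = M / (8 * sk) := by ring
    _ ≤ C := by rw [div_le_iff₀ (by positivity)]; nlinarith [g4, hC, hsk0]

theorem lifted_grid_counterexample :
    ∃ c : ℝ, 0 < c ∧
      ∀ m : ℕ, 2 ≤ m →
        ∀ k : ℕ, 2 ≤ k → k ≤ m ^ 2 →
          ∀ (u : ℕ) (Q : Fin u → Finset (ℝ × ℝ × ℝ)),
            (∀ i, (Q i).Nonempty) →
            (∀ i j, i ≠ j → Disjoint (Q i) (Q j)) →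
            (∀ p : ℝ × ℝ × ℝ, p ∈ liftedGrid m ↔ ∃ i, p ∈ Q i) →
            (∀ i, k ≤ (Q i).card ∧ (Q i).card ≤ 2 * k) →
            ∃ a b c' d : ℝ, (a, b, c') ≠ (0, 0, 0) ∧
              c * Real.sqrt (((m : ℝ) ^ 2) / (k : ℝ)) ≤
                (({i : Fin u | PlaneSeparates a b c' d (Q i)}).ncard : ℝ) := by
  classical
  refine ⟨1/8, by norm_num, fun m hm k hk hkn u Q hne hdisj hcover hsize => ?_⟩
  set t := Nat.sqrt (k - 1) with htdef
  have ht1 : 1 ≤ t := by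
    have : 1 * 1 ≤ k - 1 := by omega
    exact (Nat.le_sqrt.mpr this)
  have htk : k ≤ (t + 1) * (t + 1) := by
    have h := Nat.lt_succ_sqrt (k - 1)
    rw [Nat.succ_eq_add_one, ← htdef] at h
    omega
  -- total count : m^2 ≤ 2 * k * u
  have hgrid_eq : liftedGrid m = Finset.univ.biUnion Q := by
    ext p
    simp [hcover p]
  have hcards : m ^ 2 = ∑ i : Fin u, (Q i).card := by
    rw [← card_liftedGrid m, hgrid_eq,
      Finset.card_biUnion (fun i _ j _ hij => hdisj i j hij)]
  have htotal : m ^ 2 ≤ 2 * k * u := by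
    calc m ^ 2 = ∑ i : Fin u, (Q i).card := hcards
      _ ≤ ∑ _i : Fin u, 2 * k := Finset.sum_le_sum (fun i _ => (hsize i).2)
      _ = u * (2 * k) := by simp [Finset.sum_const, Finset.card_univ, mul_comm]
      _ = 2 * k * u := by ring
  -- planes
  set planes : Finset (Bool × ℕ) := Finset.univ ×ˢ Finset.Ico 1 m with hplanesdef
  set Sep : Bool × ℕ → Fin u → Prop := fun pl j =>
    PlaneSeparates (if pl.1 then 1 else 0) (if pl.1 then 0 else 1) 0
      (-(pl.2 : ℝ) - 1/2) (Q j) with hSepdef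
  have percount : ∀ j : Fin u, t ≤ (planes.filter (fun pl => Sep pl j)).card := by
    intro j
    obtain ⟨bv, i0, h1, h2, h3⟩ := part_lemma m k hk (Q j)
      (fun p hp => (hcover p).mpr ⟨j, hp⟩) (hsize j).1
    have hsub : ({bv} : Finset Bool) ×ˢ Finset.Ico i0 (i0 + t) ⊆
        planes.filter (fun pl => Sep pl j) := by
      rintro ⟨b', i⟩ hbi
      rw [Finset.mem_product, Finset.mem_singleton] at hbi
      obtain ⟨rfl, hi⟩ := hbi
      rw [Finset.mem_Ico] at hi
      refine Finset.mem_filter.mpr ⟨?_, ?_⟩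
      · rw [hplanesdef, Finset.mem_product, Finset.mem_Ico]
        exact ⟨Finset.mem_univ _, by omega, by omega⟩
      · exact h3 i (Finset.mem_Ico.mpr hi)
    calc t = (({bv} : Finset Bool) ×ˢ Finset.Ico i0 (i0 + t)).card := by
          rw [Finset.card_product, Finset.card_singleton, Nat.card_Ico]; omega
      _ ≤ _ := Finset.card_le_card hsub
  -- double counting
  have hswap : ∑ j : Fin u, (planes.filter (fun pl => Sep pl j)).card =
      ∑ pl ∈ planes, (Finset.univ.filter (fun j => Sep pl j)).card := by
    simp only [Finset.card_filter]
    exact Finset.sum_comm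
  have hsum1 : u * t ≤ ∑ pl ∈ planes, (Finset.univ.filter (fun j => Sep pl j)).card := by
    rw [← hswap]
    calc u * t = ∑ _j : Fin u, t := by simp [Finset.sum_const, Finset.card_univ]
      _ ≤ _ := Finset.sum_le_sum (fun j _ => percount j)
  have hplanesne : planes.Nonempty := ⟨(true, 1), by
    rw [hplanesdef, Finset.mem_product, Finset.mem_Ico]
    exact ⟨Finset.mem_univ _, by omega, by omega⟩⟩
  obtain ⟨pl, hpl, hmax⟩ := Finset.exists_max_image planes
    (fun pl => (Finset.univ.filter (fun j => Sep pl j)).card) hplanesne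
  set C := (Finset.univ.filter (fun j => Sep pl j)).card with hCdef
  have hsum2 : ∑ pl' ∈ planes, (Finset.univ.filter (fun j => Sep pl' j)).card ≤
      planes.card * C := by
    calc _ ≤ ∑ _pl' ∈ planes, C := Finset.sum_le_sum (fun x hx => hmax x hx)
      _ = planes.card * C := by simp [Finset.sum_const, mul_comm]
  have hplanescard : planes.card ≤ 2 * m := by
    rw [hplanesdef, Finset.card_product, Nat.card_Ico]
    have hb : (Finset.univ : Finset Bool).card = 2 := by simp
    rw [hb]
    omega
  have hkey : u * t ≤ 2 * m * C := by
    calc u * t ≤ planes.card * C := le_trans hsum1 hsum2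
      _ ≤ 2 * m * C := Nat.mul_le_mul_right _ hplanescard
  -- conclude
  refine ⟨if pl.1 then 1 else 0, if pl.1 then 0 else 1, 0, -(pl.2 : ℝ) - 1/2, ?_, ?_⟩
  · cases pl.1 <;> simp [Prod.ext_iff]
  · have hset : {i : Fin u | PlaneSeparates (if pl.1 then 1 else 0) (if pl.1 then 0 else 1) 0
        (-(pl.2 : ℝ) - 1/2) (Q i)} = ↑(Finset.univ.filter (fun j => Sep pl j)) := by
      ext i
      simp [hSepdef]
    rw [hset, Set.ncard_coe_finset, ← hCdef]
    have hm0 : (0 : ℝ) < m := by positivity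
    have hk0 : (0 : ℝ) < k := by exact_mod_cast (by omega : 0 < k)
    have f3 : (k : ℝ) ≤ ((t : ℝ) + 1) ^ 2 := by
      have h := htk
      have : (k : ℝ) ≤ ((t + 1 : ℕ) : ℝ) * ((t + 1 : ℕ) : ℝ) := by exact_mod_cast h
      push_cast at this
      nlinarith [this]
    have f4 : (1 : ℝ) ≤ (t : ℝ) := by exact_mod_cast ht1
    have f1 : (m : ℝ) ^ 2 ≤ 2 * k * u := by exact_mod_cast htotal
    have f2 : (u : ℝ) * t ≤ 2 * m * C := by exact_mod_cast hkey
    exact arith_lemma m k t u C hm0 hk0 f3 f4 f1 f2 (by positivity) (Nat.cast_nonneg _)
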